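/- Let β ≥ γ ≥ 0 with β + γ > 1. Then for all integers k₁, k₂, one has Σ_{n∈ℤ} ⟨n−k₁⟩^{-β} ⟨n−k₂⟩^{-γ} ≤ C · φ_β(k₁−k₂) / ⟨k₁−k₂⟩^{γ}, where C depends only on β and γ. -/

import Mathlib

/-- Japanese bracket `⟨x⟩ = (1+x²)^{1/2}`. -/
noncomputable def jb (x : ℝ) : ℝ := Real.sqrt (1 + x ^ 2)

/-- `φ_β(k) = Σ_{|n| ≤ |k|} ⟨n⟩^{-β}`. -/
noncomputable def phi (β : ℝ) (k : ℤ) : ℝ :=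
  ∑ n ∈ Finset.Icc (-|k|) |k|, jb n ^ (-β)

open Real Finset

set_option linter.unusedSectionVars false
set_option linter.unusedVariables false





lemma jb_pos (x : ℝ) : 0 < jb x := Real.sqrt_pos.2 (by positivity)

lemma one_le_jb (x : ℝ) : 1 ≤ jb x := by
  rw [jb, Real.one_le_sqrt]
  nlinarith [sq_nonneg x]

lemma abs_le_jb (x : ℝ) : |x| ≤ jb x := by
  rw [jb, ← Real.sqrt_sq_eq_abs]
  exact Real.sqrt_le_sqrt (by nlinarith)

lemma jb_mono {x y : ℝ} (h : |x| ≤ |y|) : jb x ≤ jb y := by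
  apply Real.sqrt_le_sqrt
  nlinarith [abs_nonneg x, sq_abs x, sq_abs y, mul_self_le_mul_self (abs_nonneg x) h]

lemma jb_le_half {m k : ℝ} (h : |k| ≤ 2 * |m|) : jb k ≤ 2 * jb m := by
  have h2 : jb k ≤ Real.sqrt ((2:ℝ)^2 * (1 + m^2)) := by
    apply Real.sqrt_le_sqrt
    nlinarith [mul_self_le_mul_self (abs_nonneg k) h, sq_abs k, sq_abs m]
  rwa [Real.sqrt_mul (by positivity), Real.sqrt_sq (by norm_num)] at h2

lemma jb_le_one_add_abs (x : ℝ) : jb x ≤ 1 + |x| := by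
  rw [jb, show (1:ℝ) + |x| = Real.sqrt ((1+|x|)^2) by
    rw [Real.sqrt_sq (by positivity)]]
  exact Real.sqrt_le_sqrt (by nlinarith [abs_nonneg x, sq_abs x])

lemma rpow_neg_anti {a b t : ℝ} (ha : 0 < a) (hab : a ≤ b) (ht : 0 ≤ t) :
    b ^ (-t) ≤ a ^ (-t) :=
  Real.rpow_le_rpow_of_nonpos ha hab (neg_nonpos.2 ht)

lemma half_rpow (a t : ℝ) (ha : 0 ≤ a) : (a/2) ^ (-t) = a ^ (-t) * 2 ^ t := by
  rw [Real.div_rpow ha (by norm_num), Real.rpow_neg (by norm_num : (0:ℝ) ≤ 2),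
    div_inv_eq_mul]




lemma bern_key {q u : ℝ} (hq : 0 ≤ q) (hu0 : 0 ≤ u) (hu1 : u < 1) :
    (1 - u) ^ q * (1 + q * u) ≤ 1 := by
  have h1 : (1 - u) ^ q ≤ Real.exp (-u) ^ q :=
    Real.rpow_le_rpow (by linarith) (by linarith [Real.add_one_le_exp (-u)]) hq
  have h2 : Real.exp (-u) ^ q = Real.exp (-(u * q)) := by
    rw [← Real.exp_mul]; ring_nf
  have h3 : Real.exp (-(u * q)) * (1 + q * u) ≤ 1 := by
    have h4 : 1 + q * u ≤ Real.exp (u * q) := by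
      have := Real.add_one_le_exp (u * q); nlinarith
    calc Real.exp (-(u * q)) * (1 + q * u) ≤ Real.exp (-(u * q)) * Real.exp (u * q) :=
          mul_le_mul_of_nonneg_left h4 (Real.exp_pos _).le
      _ = 1 := by rw [← Real.exp_add]; simp
  have hpos : (0:ℝ) ≤ 1 + q * u := by positivity
  calc (1 - u) ^ q * (1 + q * u) ≤ Real.exp (-(u*q)) * (1 + q * u) := by
        rw [← h2]; exact mul_le_mul_of_nonneg_right h1 hpos
    _ ≤ 1 := h3

lemma tele {s x : ℝ} (hs : 1 < s) (hx : 2 ≤ x) :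
    (s - 1) * x ^ (-s) ≤ (x - 1) ^ (1 - s) - x ^ (1 - s) := by
  have hx0 : (0:ℝ) < x := by linarith
  have hx1 : (0:ℝ) < x - 1 := by linarith
  have hu1 : 1 / x < 1 := by rw [div_lt_one hx0]; linarith
  have hkey := bern_key (q := s - 1) (u := 1 / x) (by linarith) (by positivity) hu1
  set P := (1 - 1 / x) ^ (s - 1) with hP
  have hPpos : 0 < P := Real.rpow_pos_of_pos (by linarith) _
  -- A ≤ P⁻¹ where A = 1 + (s-1)/x
  have hA : 1 + (s - 1) * (1 / x) ≤ P⁻¹ := by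
    have := mul_le_mul_of_nonneg_left hkey (inv_nonneg.2 hPpos.le)
    rwa [← mul_assoc, inv_mul_cancel₀ hPpos.ne', one_mul, mul_one] at this
  -- (x-1)^(s-1) = x^(s-1) * P
  have e1 : (x - 1) ^ (s - 1) = x ^ (s - 1) * P := by
    rw [hP, ← Real.mul_rpow hx0.le (by linarith : (0:ℝ) ≤ 1 - 1/x)]
    congr 1; field_simp
  have e2 : (x - 1) ^ (1 - s) = x ^ (1 - s) * P⁻¹ := by
    rw [show (1:ℝ) - s = -(s-1) by ring, Real.rpow_neg hx1.le, Real.rpow_neg hx0.le, e1,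
      mul_inv]
  have e3 : x ^ (1 - s) * (1 / x) = x ^ (-s) := by
    rw [one_div, ← Real.rpow_neg_one x, ← Real.rpow_add hx0]
    ring_nf
  have hxs : 0 < x ^ (1 - s) := Real.rpow_pos_of_pos hx0 _
  have := mul_le_mul_of_nonneg_left hA hxs.le
  rw [mul_add, mul_one, ← mul_assoc, mul_comm (x ^ (1-s)) (s-1), mul_assoc, e3] at this
  rw [e2]; linarith




lemma nat_tail {s : ℝ} (hs : 1 < s) {N : ℕ} (M : ℕ) (hN : 1 ≤ N) :
    ∑ j ∈ Icc N M, (j:ℝ) ^ (-s) ≤ (1 + 1/(s-1)) * (N:ℝ) ^ (1-s) := by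
  have hs1 : (0:ℝ) < s - 1 := by linarith
  have hN0 : (0:ℝ) < N := by exact_mod_cast hN
  have hNrp : (0:ℝ) < (N:ℝ) ^ (1-s) := Real.rpow_pos_of_pos hN0 _
  rcases lt_or_ge M N with h | h
  · rw [Finset.Icc_eq_empty (by omega)]
    simp only [Finset.sum_empty]
    positivity
  · rw [Finset.Icc_eq_cons_Ioc h, Finset.sum_cons]
    have head : (N:ℝ) ^ (-s) ≤ (N:ℝ) ^ (1-s) :=
      Real.rpow_le_rpow_of_exponent_le (by exact_mod_cast hN) (by linarith)
    have tail : ∑ j ∈ Ioc N M, (j:ℝ) ^ (-s) ≤ (1/(s-1)) * (N:ℝ) ^ (1-s) := by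
      have hIoc : Ioc N M = Ico (N+1) (M+1) := by
        rw [Finset.Ico_add_one_right_eq_Icc]; ext j; simp only [Finset.mem_Ioc, Finset.mem_Icc]; omega
      rw [hIoc, Finset.sum_Ico_eq_sum_range]
      have step : ∀ i ∈ Finset.range (M + 1 - (N + 1)),
          ((N + 1 + i : ℕ) : ℝ) ^ (-s)
            ≤ (1/(s-1)) * (((N + i : ℕ):ℝ) ^ (1-s) - ((N + (i+1) : ℕ):ℝ) ^ (1-s)) := by
        intro i _
        have hx : (2:ℝ) ≤ ((N + 1 + i : ℕ) : ℝ) := by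
          push_cast; have : (1:ℝ) ≤ N := by exact_mod_cast hN
          linarith [Nat.cast_nonneg (α := ℝ) i]
        have ht := tele hs hx
        have e : ((N + 1 + i : ℕ) : ℝ) - 1 = ((N + i : ℕ) : ℝ) := by push_cast; ring
        have e2 : ((N + (i+1) : ℕ) : ℝ) = ((N + 1 + i : ℕ) : ℝ) := by push_cast; ring
        rw [e] at ht
        rw [e2]
        rw [show (1/(s-1)) * (((N + i : ℕ):ℝ) ^ (1-s) - ((N + 1 + i : ℕ):ℝ) ^ (1-s))
          = (((N + i : ℕ):ℝ) ^ (1-s) - ((N + 1 + i : ℕ):ℝ) ^ (1-s)) / (s-1) by ring,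
          le_div_iff₀ hs1]
        nlinarith [ht]
      calc ∑ i ∈ Finset.range (M + 1 - (N + 1)), ((N + 1 + i : ℕ):ℝ) ^ (-s)
          ≤ ∑ i ∈ Finset.range (M + 1 - (N + 1)),
              (1/(s-1)) * (((N + i : ℕ):ℝ) ^ (1-s) - ((N + (i+1) : ℕ):ℝ) ^ (1-s)) :=
            Finset.sum_le_sum step
        _ = (1/(s-1)) * (((N + 0 : ℕ):ℝ) ^ (1-s) - ((N + (M+1-(N+1)) : ℕ):ℝ) ^ (1-s)) := by
            rw [← Finset.mul_sum, Finset.sum_range_sub' (fun i => ((N + i : ℕ):ℝ) ^ (1-s))]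
        _ ≤ (1/(s-1)) * (N:ℝ) ^ (1-s) := by
            have : (0:ℝ) ≤ ((N + (M+1-(N+1)) : ℕ):ℝ) ^ (1-s) :=
              Real.rpow_nonneg (Nat.cast_nonneg _) _
            have h10 : (0:ℝ) < 1/(s-1) := by positivity
            simp only [Nat.add_zero]
            nlinarith
    linarith [tail, head, mul_le_mul_of_nonneg_right (le_refl (1:ℝ)) hNrp.le]




lemma int_tail {s : ℝ} (hs : 1 < s) {N : ℕ} (hN : 1 ≤ N) (G : Finset ℤ)
    (hG : ∀ m ∈ G, N ≤ m.natAbs) :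
    ∑ m ∈ G, jb m ^ (-s) ≤ 2 * ((1 + 1/(s-1)) * (N:ℝ) ^ (1-s)) := by
  have hstep : ∀ m ∈ G, jb m ^ (-s) ≤ ((m.natAbs : ℕ) : ℝ) ^ (-s) := by
    intro m hm
    apply rpow_neg_anti _ _ (by linarith)
    · have := hG m hm
      have : (1:ℝ) ≤ (m.natAbs : ℝ) := by exact_mod_cast Nat.one_le_iff_ne_zero.2 (by omega)
      linarith
    · rw [Nat.cast_natAbs, Int.cast_abs]
      exact abs_le_jb _
  set M : ℕ := G.sup Int.natAbs with hM
  have hGM : ∀ m ∈ G, m.natAbs ≤ M := fun m hm => Finset.le_sup hm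
  have himg : ∀ (H : Finset ℤ), H ⊆ G → Set.InjOn Int.natAbs H →
      ∑ m ∈ H, ((m.natAbs : ℕ) : ℝ) ^ (-s) ≤ (1 + 1/(s-1)) * (N:ℝ) ^ (1-s) := by
    intro H hHG hinj
    rw [← Finset.sum_image (g := Int.natAbs) (f := fun j : ℕ => (j:ℝ) ^ (-s))
      (fun x hx y hy h => hinj (by exact_mod_cast hx) (by exact_mod_cast hy) h)]
    refine le_trans (Finset.sum_le_sum_of_subset_of_nonneg ?_ ?_) (nat_tail hs M hN)
    · intro j hj
      rw [Finset.mem_image] at hj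
      obtain ⟨m, hm, rfl⟩ := hj
      exact Finset.mem_Icc.2 ⟨hG m (hHG hm), hGM m (hHG hm)⟩
    · intro j _ _
      positivity
  have hsplit := Finset.sum_filter_add_sum_filter_not G (fun m => 0 ≤ m)
    (fun m => ((m.natAbs : ℕ) : ℝ) ^ (-s))
  have h1 := himg (G.filter (fun m => 0 ≤ m)) (Finset.filter_subset _ _) ?_
  have h2 := himg (G.filter (fun m => ¬ 0 ≤ m)) (Finset.filter_subset _ _) ?_
  · calc ∑ m ∈ G, jb m ^ (-s) ≤ ∑ m ∈ G, ((m.natAbs : ℕ) : ℝ) ^ (-s) :=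
        Finset.sum_le_sum hstep
      _ = _ + _ := hsplit.symm
      _ ≤ _ := by linarith
  · intro a ha b hb h
    simp only [Finset.coe_filter, Set.mem_setOf_eq] at ha hb
    omega
  · intro a ha b hb h
    simp only [Finset.coe_filter, Set.mem_setOf_eq] at ha hb
    omega





lemma phi_nonneg (β : ℝ) (k : ℤ) : 0 ≤ phi β k :=
  Finset.sum_nonneg fun n _ => Real.rpow_nonneg (jb_pos _).le _

lemma sum_le_phi {β : ℝ} (k : ℤ) (H : Finset ℤ)
    (hH : ∀ m ∈ H, m ∈ Finset.Icc (-|k|) |k|) :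
    ∑ m ∈ H, jb m ^ (-β) ≤ phi β k :=
  Finset.sum_le_sum_of_subset_of_nonneg hH
    (fun _ _ _ => Real.rpow_nonneg (jb_pos _).le _)

lemma jb_le_phi {β : ℝ} (hβ : 0 ≤ β) (k : ℤ) : jb k ^ (1 - β) ≤ phi β k := by
  have hterm : ∀ n ∈ Finset.Icc (-|k|) |k|, jb (k:ℝ) ^ (-β) ≤ jb (n:ℝ) ^ (-β) := by
    intro n hn
    rw [Finset.mem_Icc] at hn
    have habs : |(n:ℝ)| ≤ |(k:ℝ)| := by
      rw [← Int.cast_abs, ← Int.cast_abs, Int.cast_le]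
      rw [abs_le]; exact hn
    exact rpow_neg_anti (jb_pos _) (jb_mono habs) hβ
  have hcard : ((Finset.Icc (-|k|) |k|).card : ℝ) = 2 * (k.natAbs : ℝ) + 1 := by
    rw [Int.card_Icc]
    have : (|k| + 1 - -|k|).toNat = 2 * k.natAbs + 1 := by
      rw [Int.abs_eq_natAbs]; omega
    rw [this]; push_cast; ring
  have hsum := Finset.card_nsmul_le_sum _ _ _ hterm
  rw [nsmul_eq_mul, hcard] at hsum
  have habs_eq : |(k:ℝ)| = (k.natAbs : ℝ) := by
    rw [Nat.cast_natAbs, Int.cast_abs]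
  have hk1 : jb (k:ℝ) ≤ 2 * (k.natAbs : ℝ) + 1 := by
    have h := jb_le_one_add_abs (k:ℝ)
    rw [habs_eq] at h
    have : (0:ℝ) ≤ (k.natAbs : ℝ) := Nat.cast_nonneg _
    linarith
  have hrw : jb (k:ℝ) ^ (1-β) = jb (k:ℝ) ^ (1:ℝ) * jb (k:ℝ) ^ (-β) := by
    rw [show (1:ℝ) - β = 1 + -β by ring, Real.rpow_add (jb_pos _)]
  rw [Real.rpow_one] at hrw
  have h5 : jb (k:ℝ) * jb (k:ℝ) ^ (-β) ≤ (2 * (k.natAbs : ℝ) + 1) * jb (k:ℝ) ^ (-β) :=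
    mul_le_mul_of_nonneg_right hk1 (Real.rpow_nonneg (jb_pos _).le _)
  rw [hrw]
  calc jb (k:ℝ) * jb (k:ℝ) ^ (-β) ≤ (2 * (k.natAbs : ℝ) + 1) * jb (k:ℝ) ^ (-β) := h5
    _ ≤ ∑ n ∈ Finset.Icc (-|k|) |k|, jb (n:ℝ) ^ (-β) := hsum
    _ = phi β k := rfl





section pieces
variable {β γ : ℝ} (hγ : 0 ≤ γ) (hβγ : γ ≤ β) (k : ℤ)

private lemma cast_natAbs_eq (m : ℤ) : ((m.natAbs : ℝ)) = |(m:ℝ)| := by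
  rw [Nat.cast_natAbs, Int.cast_abs]

private lemma cast_natAbs_sub (m : ℤ) : (((m - k).natAbs : ℝ)) = |(m:ℝ) - (k:ℝ)| := by
  rw [cast_natAbs_eq]; norm_num

include hγ hβγ in
lemma piece1 (H : Finset ℤ) (hH : ∀ m ∈ H, 2 * m.natAbs ≤ k.natAbs) :
    ∑ m ∈ H, jb ((m:ℝ) - (k:ℝ)) ^ (-β) * jb (m:ℝ) ^ (-γ)
      ≤ (2:ℝ) ^ β * (phi β k * jb (k:ℝ) ^ (-γ)) := by
  have hβ : 0 ≤ β := le_trans hγ hβγ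
  have hterm : ∀ m ∈ H, jb ((m:ℝ) - (k:ℝ)) ^ (-β) * jb (m:ℝ) ^ (-γ)
      ≤ ((2:ℝ) ^ β * jb (k:ℝ) ^ (-γ)) * jb (m:ℝ) ^ (-β) := by
    intro m hm
    have hc := hH m hm
    have hint : k.natAbs ≤ 2 * (m - k).natAbs := by omega
    have hreal : |(k:ℝ)| ≤ 2 * |(m:ℝ) - (k:ℝ)| := by
      rw [← cast_natAbs_eq, ← cast_natAbs_sub k m]
      exact_mod_cast hint
    have hjb : jb (k:ℝ) ≤ 2 * jb ((m:ℝ) - (k:ℝ)) := jb_le_half hreal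
    have h1 : jb ((m:ℝ) - (k:ℝ)) ^ (-β) ≤ jb (k:ℝ) ^ (-β) * 2 ^ β := by
      have h2 := rpow_neg_anti (a := jb (k:ℝ) / 2) (b := jb ((m:ℝ) - (k:ℝ)))
        (div_pos (jb_pos _) two_pos) (by linarith) hβ
      rwa [half_rpow _ _ (jb_pos _).le] at h2
    have hmk : jb (m:ℝ) ≤ jb (k:ℝ) := by
      apply jb_mono
      rw [← cast_natAbs_eq, ← cast_natAbs_eq]
      exact_mod_cast (by omega : m.natAbs ≤ k.natAbs)
    have h2 : jb (m:ℝ) ^ (-γ) ≤ jb (m:ℝ) ^ (-β) * jb (k:ℝ) ^ (β - γ) := by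
      have e : jb (m:ℝ) ^ (-γ) = jb (m:ℝ) ^ (-β) * jb (m:ℝ) ^ (β - γ) := by
        rw [show -γ = -β + (β - γ) by ring, Real.rpow_add (jb_pos _)]
      rw [e]
      exact mul_le_mul_of_nonneg_left
        (Real.rpow_le_rpow (jb_pos _).le hmk (by linarith))
        (Real.rpow_nonneg (jb_pos _).le _)
    have e3 : jb (k:ℝ) ^ (-β) * jb (k:ℝ) ^ (β - γ) = jb (k:ℝ) ^ (-γ) := by
      rw [← Real.rpow_add (jb_pos _), show -β + (β - γ) = -γ by ring]
    calc jb ((m:ℝ) - (k:ℝ)) ^ (-β) * jb (m:ℝ) ^ (-γ)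
        ≤ (jb (k:ℝ) ^ (-β) * 2 ^ β) * (jb (m:ℝ) ^ (-β) * jb (k:ℝ) ^ (β - γ)) :=
          mul_le_mul h1 h2 (Real.rpow_nonneg (jb_pos _).le _)
            (mul_nonneg (Real.rpow_nonneg (jb_pos _).le _) (Real.rpow_nonneg (by norm_num) _))
      _ = ((2:ℝ) ^ β * jb (k:ℝ) ^ (-γ)) * jb (m:ℝ) ^ (-β) := by rw [← e3]; ring
  calc ∑ m ∈ H, jb ((m:ℝ) - (k:ℝ)) ^ (-β) * jb (m:ℝ) ^ (-γ)
      ≤ ∑ m ∈ H, ((2:ℝ) ^ β * jb (k:ℝ) ^ (-γ)) * jb (m:ℝ) ^ (-β) :=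
        Finset.sum_le_sum hterm
    _ = ((2:ℝ) ^ β * jb (k:ℝ) ^ (-γ)) * ∑ m ∈ H, jb (m:ℝ) ^ (-β) := by
        rw [← Finset.mul_sum]
    _ ≤ ((2:ℝ) ^ β * jb (k:ℝ) ^ (-γ)) * phi β k := by
        refine mul_le_mul_of_nonneg_left (sum_le_phi k H ?_)
          (mul_nonneg (Real.rpow_nonneg (by norm_num) _) (Real.rpow_nonneg (jb_pos _).le _))
        intro m hm
        have := hH m hm
        rw [Finset.mem_Icc, Int.abs_eq_natAbs]
        omega
    _ = (2:ℝ) ^ β * (phi β k * jb (k:ℝ) ^ (-γ)) := by ring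

include hγ hβγ in
lemma piece2 (H : Finset ℤ) (hH : ∀ m ∈ H, 2 * (m - k).natAbs ≤ k.natAbs) :
    ∑ m ∈ H, jb ((m:ℝ) - (k:ℝ)) ^ (-β) * jb (m:ℝ) ^ (-γ)
      ≤ (2:ℝ) ^ γ * (phi β k * jb (k:ℝ) ^ (-γ)) := by
  have hterm : ∀ m ∈ H, jb ((m:ℝ) - (k:ℝ)) ^ (-β) * jb (m:ℝ) ^ (-γ)
      ≤ ((2:ℝ) ^ γ * jb (k:ℝ) ^ (-γ)) * jb ((m:ℝ) - (k:ℝ)) ^ (-β) := by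
    intro m hm
    have hc := hH m hm
    have hint : k.natAbs ≤ 2 * m.natAbs := by omega
    have hreal : |(k:ℝ)| ≤ 2 * |(m:ℝ)| := by
      rw [← cast_natAbs_eq, ← cast_natAbs_eq]
      exact_mod_cast hint
    have hjb : jb (k:ℝ) ≤ 2 * jb (m:ℝ) := jb_le_half hreal
    have h1 : jb (m:ℝ) ^ (-γ) ≤ jb (k:ℝ) ^ (-γ) * 2 ^ γ := by
      have h2 := rpow_neg_anti (a := jb (k:ℝ) / 2) (b := jb (m:ℝ))
        (div_pos (jb_pos _) two_pos) (by linarith) hγ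
      rwa [half_rpow _ _ (jb_pos _).le] at h2
    calc jb ((m:ℝ) - (k:ℝ)) ^ (-β) * jb (m:ℝ) ^ (-γ)
        ≤ jb ((m:ℝ) - (k:ℝ)) ^ (-β) * (jb (k:ℝ) ^ (-γ) * 2 ^ γ) :=
          mul_le_mul_of_nonneg_left h1 (Real.rpow_nonneg (jb_pos _).le _)
      _ = ((2:ℝ) ^ γ * jb (k:ℝ) ^ (-γ)) * jb ((m:ℝ) - (k:ℝ)) ^ (-β) := by ring
  have himg : ∑ m ∈ H, jb ((m:ℝ) - (k:ℝ)) ^ (-β) ≤ phi β k := by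
    have e : ∀ m ∈ H, jb ((m:ℝ) - (k:ℝ)) ^ (-β)
        = (fun j : ℤ => jb (j:ℝ) ^ (-β)) (m - k) := by
      intro m _; simp only [Int.cast_sub]
    rw [Finset.sum_congr rfl e,
      ← Finset.sum_image (g := fun m => m - k) (f := fun j : ℤ => jb (j:ℝ) ^ (-β))
        (fun x _ y _ h => sub_left_injective h)]
    apply sum_le_phi
    intro j hj
    rw [Finset.mem_image] at hj
    obtain ⟨m, hm, rfl⟩ := hj
    have := hH m hm
    rw [Finset.mem_Icc, Int.abs_eq_natAbs]
    omega
  calc ∑ m ∈ H, jb ((m:ℝ) - (k:ℝ)) ^ (-β) * jb (m:ℝ) ^ (-γ)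
      ≤ ∑ m ∈ H, ((2:ℝ) ^ γ * jb (k:ℝ) ^ (-γ)) * jb ((m:ℝ) - (k:ℝ)) ^ (-β) :=
        Finset.sum_le_sum hterm
    _ = ((2:ℝ) ^ γ * jb (k:ℝ) ^ (-γ)) * ∑ m ∈ H, jb ((m:ℝ) - (k:ℝ)) ^ (-β) := by
        rw [← Finset.mul_sum]
    _ ≤ ((2:ℝ) ^ γ * jb (k:ℝ) ^ (-γ)) * phi β k := by
        exact mul_le_mul_of_nonneg_left himg
          (mul_nonneg (Real.rpow_nonneg (by norm_num) _) (Real.rpow_nonneg (jb_pos _).le _))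
    _ = (2:ℝ) ^ γ * (phi β k * jb (k:ℝ) ^ (-γ)) := by ring

include hγ hβγ in
lemma piece3a (hsum : 1 < β + γ) (H : Finset ℤ)
    (hH : ∀ m ∈ H, k.natAbs < 2 * m.natAbs ∧ m.natAbs ≤ (m - k).natAbs) :
    ∑ m ∈ H, jb ((m:ℝ) - (k:ℝ)) ^ (-β) * jb (m:ℝ) ^ (-γ)
      ≤ 2 * ((1 + 1/(β+γ-1)) * ((k.natAbs / 2 + 1 : ℕ):ℝ) ^ (1-(β+γ))) := by
  have hterm : ∀ m ∈ H, jb ((m:ℝ) - (k:ℝ)) ^ (-β) * jb (m:ℝ) ^ (-γ)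
      ≤ jb (m:ℝ) ^ (-(β+γ)) := by
    intro m hm
    have habs : |(m:ℝ)| ≤ |(m:ℝ) - (k:ℝ)| := by
      rw [← cast_natAbs_eq, ← cast_natAbs_sub k m]
      exact_mod_cast (hH m hm).2
    have h1 : jb ((m:ℝ) - (k:ℝ)) ^ (-β) ≤ jb (m:ℝ) ^ (-β) :=
      rpow_neg_anti (jb_pos _) (jb_mono habs) (le_trans hγ hβγ)
    calc jb ((m:ℝ) - (k:ℝ)) ^ (-β) * jb (m:ℝ) ^ (-γ)
        ≤ jb (m:ℝ) ^ (-β) * jb (m:ℝ) ^ (-γ) :=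
          mul_le_mul_of_nonneg_right h1 (Real.rpow_nonneg (jb_pos _).le _)
      _ = jb (m:ℝ) ^ (-(β+γ)) := by
          rw [← Real.rpow_add (jb_pos _), show -β + -γ = -(β+γ) by ring]
  calc ∑ m ∈ H, jb ((m:ℝ) - (k:ℝ)) ^ (-β) * jb (m:ℝ) ^ (-γ)
      ≤ ∑ m ∈ H, jb (m:ℝ) ^ (-(β+γ)) := Finset.sum_le_sum hterm
    _ ≤ _ := by
        apply int_tail hsum (by omega : 1 ≤ k.natAbs / 2 + 1)
        intro m hm
        have := (hH m hm).1
        omega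

include hγ hβγ in
lemma piece3b (hsum : 1 < β + γ) (H : Finset ℤ)
    (hH : ∀ m ∈ H, k.natAbs < 2 * (m - k).natAbs ∧ (m - k).natAbs < m.natAbs) :
    ∑ m ∈ H, jb ((m:ℝ) - (k:ℝ)) ^ (-β) * jb (m:ℝ) ^ (-γ)
      ≤ 2 * ((1 + 1/(β+γ-1)) * ((k.natAbs / 2 + 1 : ℕ):ℝ) ^ (1-(β+γ))) := by
  have hterm : ∀ m ∈ H, jb ((m:ℝ) - (k:ℝ)) ^ (-β) * jb (m:ℝ) ^ (-γ)
      ≤ (fun j : ℤ => jb (j:ℝ) ^ (-(β+γ))) (m - k) := by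
    intro m hm
    have habs : |(m:ℝ) - (k:ℝ)| ≤ |(m:ℝ)| := by
      rw [← cast_natAbs_eq, ← cast_natAbs_sub k m]
      exact_mod_cast (le_of_lt (hH m hm).2)
    have h1 : jb (m:ℝ) ^ (-γ) ≤ jb ((m:ℝ) - (k:ℝ)) ^ (-γ) :=
      rpow_neg_anti (jb_pos _) (jb_mono habs) hγ
    simp only [Int.cast_sub]
    calc jb ((m:ℝ) - (k:ℝ)) ^ (-β) * jb (m:ℝ) ^ (-γ)
        ≤ jb ((m:ℝ) - (k:ℝ)) ^ (-β) * jb ((m:ℝ) - (k:ℝ)) ^ (-γ) :=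
          mul_le_mul_of_nonneg_left h1 (Real.rpow_nonneg (jb_pos _).le _)
      _ = jb ((m:ℝ) - (k:ℝ)) ^ (-(β+γ)) := by
          rw [← Real.rpow_add (jb_pos _), show -β + -γ = -(β+γ) by ring]
  calc ∑ m ∈ H, jb ((m:ℝ) - (k:ℝ)) ^ (-β) * jb (m:ℝ) ^ (-γ)
      ≤ ∑ m ∈ H, (fun j : ℤ => jb (j:ℝ) ^ (-(β+γ))) (m - k) := Finset.sum_le_sum hterm
    _ = ∑ j ∈ H.image (fun m => m - k), jb (j:ℝ) ^ (-(β+γ)) := by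
        rw [Finset.sum_image (g := fun m => m - k) (f := fun j : ℤ => jb (j:ℝ) ^ (-(β+γ)))
          (fun x _ y _ h => sub_left_injective h)]
    _ ≤ _ := by
        apply int_tail hsum (by omega : 1 ≤ k.natAbs / 2 + 1)
        intro j hj
        rw [Finset.mem_image] at hj
        obtain ⟨m, hm, rfl⟩ := hj
        have := (hH m hm).1
        omega

end pieces

lemma main_finite {β γ : ℝ} (hγ : 0 ≤ γ) (hβγ : γ ≤ β) (hsum : 1 < β + γ)
    (k : ℤ) (G : Finset ℤ) :
    ∑ m ∈ G, jb ((m:ℝ) - (k:ℝ)) ^ (-β) * jb (m:ℝ) ^ (-γ)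
      ≤ ((2:ℝ) ^ β + 2 ^ γ + 4 * ((1 + 1/(β+γ-1)) * 2 ^ (β+γ-1)))
          * (phi β k * jb (k:ℝ) ^ (-γ)) := by
  classical
  set f : ℤ → ℝ := fun m => jb ((m:ℝ) - (k:ℝ)) ^ (-β) * jb (m:ℝ) ^ (-γ) with hf
  set X := phi β k * jb (k:ℝ) ^ (-γ) with hX
  have hX0 : 0 ≤ X := mul_nonneg (phi_nonneg _ _) (Real.rpow_nonneg (jb_pos _).le _)
  set P1 : ℤ → Prop := fun m => 2 * m.natAbs ≤ k.natAbs with hP1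
  set P2 : ℤ → Prop := fun m => 2 * (m - k).natAbs ≤ k.natAbs with hP2
  set P3 : ℤ → Prop := fun m => m.natAbs ≤ (m - k).natAbs with hP3
  have e1 := Finset.sum_filter_add_sum_filter_not G P1 f
  have e2 := Finset.sum_filter_add_sum_filter_not (G.filter fun m => ¬ P1 m) P2 f
  have e3 := Finset.sum_filter_add_sum_filter_not
    ((G.filter fun m => ¬ P1 m).filter fun m => ¬ P2 m) P3 f
  have hb1 : ∑ m ∈ G.filter P1, f m ≤ (2:ℝ) ^ β * X :=
    piece1 hγ hβγ k _ (fun m hm => (Finset.mem_filter.1 hm).2)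
  have hb2 : ∑ m ∈ (G.filter fun m => ¬ P1 m).filter P2, f m ≤ (2:ℝ) ^ γ * X :=
    piece2 hγ hβγ k _ (fun m hm => (Finset.mem_filter.1 hm).2)
  set N : ℕ := k.natAbs / 2 + 1 with hN
  have hb3a : ∑ m ∈ ((G.filter fun m => ¬ P1 m).filter fun m => ¬ P2 m).filter P3, f m
      ≤ 2 * ((1 + 1/(β+γ-1)) * ((N:ℕ):ℝ) ^ (1-(β+γ))) := by
    apply piece3a hγ hβγ k hsum
    intro m hm
    simp only [Finset.mem_filter, hP1, hP2, hP3] at hm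
    exact ⟨by omega, hm.2⟩
  have hb3b : ∑ m ∈ ((G.filter fun m => ¬ P1 m).filter fun m => ¬ P2 m).filter
      (fun m => ¬ P3 m), f m
      ≤ 2 * ((1 + 1/(β+γ-1)) * ((N:ℕ):ℝ) ^ (1-(β+γ))) := by
    apply piece3b hγ hβγ k hsum
    intro m hm
    simp only [Finset.mem_filter, hP1, hP2, hP3] at hm
    exact ⟨by omega, by omega⟩
  -- tail conversion
  have hc : (0:ℝ) ≤ 1 + 1/(β+γ-1) := by
    have : (0:ℝ) < β + γ - 1 := by linarith
    positivity
  have htail : ((N:ℕ):ℝ) ^ (1-(β+γ)) ≤ 2 ^ (β+γ-1) * X := by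
    have hN2 : jb (k:ℝ) / 2 ≤ ((N:ℕ):ℝ) := by
      have h1 : (k.natAbs:ℝ) + 1 ≤ 2 * ((N:ℕ):ℝ) := by
        exact_mod_cast (by omega : k.natAbs + 1 ≤ 2 * N)
      have h2 := jb_le_one_add_abs (k:ℝ)
      rw [← cast_natAbs_eq] at h2
      linarith
    have h1 : ((N:ℕ):ℝ) ^ (1-(β+γ)) ≤ (jb (k:ℝ)/2) ^ (1-(β+γ)) := by
      rw [show 1-(β+γ) = -((β+γ)-1) by ring]
      exact rpow_neg_anti (div_pos (jb_pos _) two_pos) hN2 (by linarith)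
    have h2 : (jb (k:ℝ)/2) ^ (-((β+γ)-1))
        = jb (k:ℝ) ^ (-((β+γ)-1)) * 2 ^ ((β+γ)-1) := half_rpow _ _ (jb_pos _).le
    have h3 : jb (k:ℝ) ^ (-((β+γ)-1)) = jb (k:ℝ) ^ (1-β) * jb (k:ℝ) ^ (-γ) := by
      rw [← Real.rpow_add (jb_pos _), show (1-β) + -γ = -((β+γ)-1) by ring]
    have h4 : jb (k:ℝ) ^ (1-β) * jb (k:ℝ) ^ (-γ) ≤ X :=
      mul_le_mul_of_nonneg_right (jb_le_phi (le_trans hγ hβγ) k)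
        (Real.rpow_nonneg (jb_pos _).le _)
    have h5 : (0:ℝ) < 2 ^ ((β+γ)-1) := Real.rpow_pos_of_pos two_pos _
    calc ((N:ℕ):ℝ) ^ (1-(β+γ)) ≤ (jb (k:ℝ)/2) ^ (1-(β+γ)) := h1
      _ = jb (k:ℝ) ^ (-((β+γ)-1)) * 2 ^ ((β+γ)-1) := by
          rw [show 1-(β+γ) = -((β+γ)-1) by ring] at *; exact h2
      _ = (jb (k:ℝ) ^ (1-β) * jb (k:ℝ) ^ (-γ)) * 2 ^ ((β+γ)-1) := by rw [h3]
      _ ≤ X * 2 ^ ((β+γ)-1) := mul_le_mul_of_nonneg_right h4 h5.le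
      _ = 2 ^ (β+γ-1) * X := by ring
  have hmul := mul_le_mul_of_nonneg_left htail
    (by positivity : (0:ℝ) ≤ 4 * (1 + 1/(β+γ-1)))
  calc ∑ m ∈ G, f m
      = ∑ m ∈ G.filter P1, f m + (∑ m ∈ (G.filter fun m => ¬ P1 m).filter P2, f m
        + (∑ m ∈ ((G.filter fun m => ¬ P1 m).filter fun m => ¬ P2 m).filter P3, f m
          + ∑ m ∈ ((G.filter fun m => ¬ P1 m).filter fun m => ¬ P2 m).filter
              (fun m => ¬ P3 m), f m)) := by rw [e3, e2, e1]
    _ ≤ ((2:ℝ) ^ β + 2 ^ γ + 4 * ((1 + 1/(β+γ-1)) * 2 ^ (β+γ-1))) * X := by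
        nlinarith [hb1, hb2, hb3a, hb3b, hmul]

theorem sum_bracket_convolution_bound (β γ : ℝ) (hγ : 0 ≤ γ) (hβγ : γ ≤ β)
    (hsum : 1 < β + γ) :
    ∃ C : ℝ, 0 < C ∧ ∀ k₁ k₂ : ℤ,
      ∑' n : ℤ, jb (n - k₁) ^ (-β) * jb (n - k₂) ^ (-γ)
        ≤ C * phi β (k₁ - k₂) / jb (k₁ - k₂) ^ γ := by
  classical
  have hs1 : (0:ℝ) < β + γ - 1 := by linarith
  refine ⟨(2:ℝ) ^ β + 2 ^ γ + 4 * ((1 + 1/(β+γ-1)) * 2 ^ (β+γ-1)), ?_, ?_⟩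
  · have h1 : (0:ℝ) < 2 ^ β := Real.rpow_pos_of_pos two_pos _
    have h2 : (0:ℝ) < 2 ^ γ := Real.rpow_pos_of_pos two_pos _
    have h3 : (0:ℝ) < 2 ^ (β+γ-1) := Real.rpow_pos_of_pos two_pos _
    have h4 : (0:ℝ) < 1 + 1/(β+γ-1) := by positivity
    positivity
  · intro k₁ k₂
    set C := (2:ℝ) ^ β + 2 ^ γ + 4 * ((1 + 1/(β+γ-1)) * 2 ^ (β+γ-1)) with hC
    have hC0 : 0 ≤ C := by
      have h1 : (0:ℝ) ≤ 2 ^ β := (Real.rpow_pos_of_pos two_pos _).le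
      have h2 : (0:ℝ) ≤ 2 ^ γ := (Real.rpow_pos_of_pos two_pos _).le
      have h3 : (0:ℝ) ≤ 2 ^ (β+γ-1) := (Real.rpow_pos_of_pos two_pos _).le
      have h4 : (0:ℝ) ≤ 1 + 1/(β+γ-1) := by positivity
      positivity
    have hjk : ((k₁:ℝ) - (k₂:ℝ)) = (((k₁ - k₂ : ℤ)):ℝ) := by push_cast; ring
    have hRHS : C * phi β (k₁ - k₂) / jb ((k₁:ℝ) - (k₂:ℝ)) ^ γ
        = C * (phi β (k₁ - k₂) * jb (((k₁ - k₂ : ℤ)):ℝ) ^ (-γ)) := by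
      rw [hjk, Real.rpow_neg (jb_pos _).le, div_eq_mul_inv]
      ring
    by_cases hsm : Summable (fun n : ℤ => jb ((n:ℝ) - k₁) ^ (-β) * jb ((n:ℝ) - k₂) ^ (-γ))
    · rw [hRHS]
      apply Summable.tsum_le_of_sum_le hsm
      intro F
      have hinj : ∀ x ∈ F, ∀ y ∈ F, x - k₂ = y - k₂ → x = y :=
        fun x _ y _ h => by omega
      have hre : ∑ n ∈ F, jb ((n:ℝ) - k₁) ^ (-β) * jb ((n:ℝ) - k₂) ^ (-γ)
          = ∑ m ∈ F.image (fun n => n - k₂),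
              jb ((m:ℝ) - ((k₁ - k₂ : ℤ):ℝ)) ^ (-β) * jb (m:ℝ) ^ (-γ) := by
        rw [Finset.sum_image (g := fun n => n - k₂)
          (f := fun m : ℤ => jb ((m:ℝ) - ((k₁ - k₂ : ℤ):ℝ)) ^ (-β) * jb (m:ℝ) ^ (-γ)) hinj]
        apply Finset.sum_congr rfl
        intro n _
        have e1 : ((n - k₂ : ℤ):ℝ) - ((k₁ - k₂ : ℤ):ℝ) = (n:ℝ) - k₁ := by push_cast; ring
        have e2 : ((n - k₂ : ℤ):ℝ) = (n:ℝ) - k₂ := by push_cast; ring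
        rw [e1, e2]
      rw [hre]
      exact main_finite hγ hβγ hsum (k₁ - k₂) _
    · rw [tsum_eq_zero_of_not_summable hsm, hRHS]
      exact mul_nonneg hC0 (mul_nonneg (phi_nonneg _ _) (Real.rpow_nonneg (jb_pos _).le _))
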